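/- Let G be a countable group generated by a finite set S, let X be a G-set, and let H be a subgroup of G such that the restricted action H ↷ X is amenable. Then φ_S(G/H) ≥ φ_S(X), where G acts on the coset space G/H by left translation. -/

import Mathlib

open Pointwise

/-- A mean on `X`: a finitely additive probability measure defined on all subsets of `X`. -/
structure Mean (X : Type*) where
  m : Set X → ℝ
  nonneg : ∀ A : Set X, 0 ≤ m A
  total : m Set.univ = 1
  fin_add : ∀ A B : Set X, Disjoint A B → m (A ∪ B) = m A + m B

/-- A mean on a `G`-set `X` is invariant if it is preserved by the action of every `g ∈ G`. -/
def MeanInvariant (G : Type*) [Group G] {X : Type*} [MulAction G X] (m : Mean X) : Prop :=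
  ∀ (g : G) (A : Set X), m.m ((fun x => g • x) '' A) = m.m A

/-- The action of `G` on `X` is amenable: there is a `G`-invariant mean on `X`. -/
def AmenableAction (G : Type*) [Group G] (X : Type*) [MulAction G X] : Prop :=
  ∃ m : Mean X, MeanInvariant G m

/-- A group is amenable if its left translation action on itself admits an invariant mean. -/
def AmenableGroup (G : Type*) [Group G] : Prop :=
  ∃ m : Mean G, ∀ (g : G) (A : Set G), m.m ((fun x => g * x) '' A) = m.m A

/-- `H` is `L`-q-normal in `M` if `{g ∈ M : gHg⁻¹ ∩ H ∈ L}` generates `M`. -/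
def IsLQNormal {G : Type*} [Group G] (L : Subgroup G → Prop) (H M : Subgroup G) : Prop :=
  H ≤ M ∧
    Subgroup.closure
      {g : G | g ∈ M ∧ L (Subgroup.map (MulAut.conj g).toMonoidHom H ⊓ H)} = M

/-- `H` is `L`-wq-normal in `M`: there is an increasing ordinal-indexed chain from `H` to `M`
whose unions of initial segments are `L`-q-normal at every stage. -/
def IsLWQNormal {G : Type*} [Group G] (L : Subgroup G → Prop) (H M : Subgroup G) : Prop :=
  ∃ (lam : Ordinal.{0}) (c : Ordinal.{0} → Subgroup G),
    (∀ α β : Ordinal.{0}, α ≤ β → β ≤ lam → c α ≤ c β) ∧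
    c 0 = H ∧ c lam = M ∧
    ∀ α : Ordinal.{0}, 0 < α → α ≤ lam →
      IsLQNormal L (⨆ (β : Ordinal.{0}) (_ : β < α), c β) (c α)

/-- q*-normality: `{g ∈ M : gHg⁻¹ ∩ H nonamenable}` generates `M`. -/
def IsQStarNormal {G : Type*} [Group G] (H M : Subgroup G) : Prop :=
  IsLQNormal (fun K => ¬ AmenableGroup ↥K) H M

/-- wq*-normality. -/
def IsWQStarNormal {G : Type*} [Group G] (H M : Subgroup G) : Prop :=
  IsLWQNormal (fun K => ¬ AmenableGroup ↥K) H M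

/-- q-normality: `{g ∈ M : gHg⁻¹ ∩ H infinite}` generates `M`. -/
def IsQNormal {G : Type*} [Group G] (H M : Subgroup G) : Prop :=
  IsLQNormal (fun K => ((K : Set G)).Infinite) H M

/-- wq-normality. -/
def IsWQNormal {G : Type*} [Group G] (H M : Subgroup G) : Prop :=
  IsLWQNormal (fun K => ((K : Set G)).Infinite) H M

/-- `n`-degree `L`-wq-normality in `G`: `L₀ = L`, `L_{n+1} = {H : H is Lₙ-wq-normal in G}`. -/
def NDegLWQNormal {G : Type*} [Group G] (L : Subgroup G → Prop) : ℕ → Subgroup G → Prop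
  | 0, H => L H
  | n + 1, H => IsLWQNormal (NDegLWQNormal L n) H ⊤

/-- The isoperimetric constant `φ_S(X)` of a `G`-set `X` with respect to a finite `S ⊆ G`. -/
noncomputable def phiConst {G : Type*} [Group G] (S : Finset G) (X : Type*) [MulAction G X] :
    ℝ :=
  sInf {r : ℝ | ∃ P : Finset X, P.Nonempty ∧
    r = (∑ s ∈ S, (((s • (P : Set X)) \ (P : Set X)).ncard : ℝ)) / (P.card : ℝ)}


namespace Mean

variable {X : Type*} (μ : Mean X)

lemma empty' : μ.m ∅ = 0 := by
  have := μ.fin_add ∅ ∅ (by simp)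
  simpa using this.symm

lemma mono {A B : Set X} (h : A ⊆ B) : μ.m A ≤ μ.m B := by
  have : μ.m B = μ.m A + μ.m (B \ A) := by
    rw [← μ.fin_add A (B \ A) disjoint_sdiff_self_right, Set.union_diff_cancel h]
  nlinarith [μ.nonneg (B \ A)]

lemma le_one (A : Set X) : μ.m A ≤ 1 := μ.total ▸ μ.mono (Set.subset_univ A)

lemma sum_disjoint {ι : Type*} (s : Finset ι) (f : ι → Set X)
    (hdisj : ∀ i ∈ s, ∀ j ∈ s, i ≠ j → Disjoint (f i) (f j)) :
    μ.m (⋃ i ∈ s, f i) = ∑ i ∈ s, μ.m (f i) := by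
  classical
  induction s using Finset.induction with
  | empty => simpa using μ.empty'
  | @insert a t ha ih =>
    rw [Finset.sum_insert ha, Finset.set_biUnion_insert,
      μ.fin_add _ _ ?_, ih (fun i hi j hj hij => hdisj i (Finset.mem_insert_of_mem hi) j
        (Finset.mem_insert_of_mem hj) hij)]
    · exact Set.disjoint_iUnion₂_right.mpr fun i hi =>
        hdisj a (Finset.mem_insert_self a t) i (Finset.mem_insert_of_mem hi)
          (fun h => ha (h ▸ hi))

/-- Atom lemma: a pointwise lower bound on a finite linear combination of indicator
functions yields the same bound for the mean values. -/
lemma sum_indicator_ge {ι : Type*} [Fintype ι] (B : ι → Set X) (a : ι → ℝ) (c : ℝ)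
    (h : ∀ x : X, c ≤ ∑ i, (B i).indicator (fun _ => a i) x) :
    c ≤ ∑ i, a i * μ.m (B i) := by
  classical
  set A : (ι → Bool) → Set X := fun σ => {x | ∀ i, x ∈ B i ↔ σ i = true} with hA
  have hdisj : ∀ σ ∈ (Finset.univ : Finset (ι → Bool)), ∀ σ' ∈ Finset.univ, σ ≠ σ' →
      Disjoint (A σ) (A σ') := by
    intro σ _ σ' _ hne
    rw [Set.disjoint_left]
    rintro x hx hx'
    apply hne
    funext i
    rw [← Bool.coe_iff_coe, ← hx i, ← hx' i]
  have hmem : ∀ x : X, x ∈ A (fun i => decide (x ∈ B i)) := by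
    intro x i
    simp
  have huniv : (⋃ σ ∈ (Finset.univ : Finset (ι → Bool)), A σ) = Set.univ := by
    apply Set.eq_univ_of_forall
    intro x
    exact Set.mem_biUnion (Finset.mem_univ _) (hmem x)
  have htotal : ∑ σ : ι → Bool, μ.m (A σ) = 1 := by
    rw [← μ.sum_disjoint _ _ hdisj, huniv, μ.total]
  have hBi : ∀ i, μ.m (B i) = ∑ σ : ι → Bool, (if σ i = true then μ.m (A σ) else 0) := by
    intro i
    rw [← Finset.sum_filter]
    rw [← μ.sum_disjoint _ _ (fun σ hσ σ' hσ' hne => hdisj σ (Finset.mem_univ _) σ'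
      (Finset.mem_univ _) hne)]
    congr 1
    ext x
    simp only [Set.mem_iUnion, Finset.mem_filter, Finset.mem_univ, true_and]
    constructor
    · intro hx
      exact ⟨fun i => decide (x ∈ B i), by simpa using hx, hmem x⟩
    · rintro ⟨σ, hσi, hxσ⟩
      exact (hxσ i).mpr hσi
  calc c = c * ∑ σ : ι → Bool, μ.m (A σ) := by rw [htotal, mul_one]
    _ = ∑ σ : ι → Bool, c * μ.m (A σ) := by rw [Finset.mul_sum]
    _ ≤ ∑ σ : ι → Bool, (∑ i, if σ i = true then a i else 0) * μ.m (A σ) := by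
        apply Finset.sum_le_sum
        intro σ _
        rcases Set.eq_empty_or_nonempty (A σ) with he | ⟨x, hx⟩
        · rw [he, μ.empty', mul_zero, mul_zero]
        · apply mul_le_mul_of_nonneg_right _ (μ.nonneg _)
          calc c ≤ ∑ i, (B i).indicator (fun _ => a i) x := h x
            _ = ∑ i, (if σ i = true then a i else 0) := by
                apply Finset.sum_congr rfl
                intro i _
                rw [Set.indicator_apply, if_congr (hx i) rfl rfl]
    _ = ∑ σ : ι → Bool, ∑ i, (if σ i = true then a i else 0) * μ.m (A σ) := by
        apply Finset.sum_congr rfl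
        intro σ _
        rw [Finset.sum_mul]
    _ = ∑ i, a i * μ.m (B i) := by
        rw [Finset.sum_comm]
        apply Finset.sum_congr rfl
        intro i _
        rw [hBi i, Finset.mul_sum]
        apply Finset.sum_congr rfl
        intro σ _
        split <;> simp

end Mean

section Coset

variable {G : Type*} [Group G] {X : Type*} [MulAction G X] {H : Subgroup G}
  (μ : Mean X)

lemma mean_smul_H (hinv : MeanInvariant ↥H μ) (η : G) (hη : η ∈ H) (A : Set X) : μ.m (η • A) = μ.m A := by
  have := hinv ⟨η, hη⟩ A
  rw [← this, Set.image_smul]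
  rfl

/-- Key identity: `ν_{s•c}(A) = ν_c(s⁻¹ • A)` for the coset-representative measures. -/
lemma mean_out_smul (hinv : MeanInvariant ↥H μ) (s : G) (c : G ⧸ H) (A : Set X) :
    μ.m ((Quotient.out (s • c))⁻¹ • A) = μ.m ((Quotient.out c)⁻¹ • (s⁻¹ • A)) := by
  set g := Quotient.out c with hg
  set g' := Quotient.out (s • c) with hg'
  have h1 : ((s * g : G) : G ⧸ H) = (g' : G ⧸ H) := by
    rw [QuotientGroup.out_eq']
    have : ((s * g : G) : G ⧸ H) = s • ((g : G) : G ⧸ H) := rfl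
    rw [this, QuotientGroup.out_eq']
  have hη : (s * g)⁻¹ * g' ∈ H := QuotientGroup.eq.mp h1
  set η := (s * g)⁻¹ * g' with hηdef
  have hg'eq : g' = s * g * η := by
    rw [hηdef]
    group
  have : g'⁻¹ • A = η⁻¹ • (g⁻¹ • (s⁻¹ • A)) := by
    rw [hg'eq]
    simp [mul_inv_rev, mul_smul]
  rw [this, mean_smul_H μ hinv η⁻¹ (inv_mem hη)]

end Coset

section CosetMean

variable {G : Type*} [Group G] {X : Type*} [MulAction G X] {H : Subgroup G}

/-- The mean on `X` induced by an `H`-invariant mean and a finite set of cosets `P ⊆ G/H`. -/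
noncomputable def cosetMean (μ : Mean X) (P : Finset (G ⧸ H)) (hP : P.Nonempty) : Mean X where
  m := fun A => (∑ c ∈ P, μ.m ((Quotient.out c)⁻¹ • A)) / P.card
  nonneg := fun A => div_nonneg (Finset.sum_nonneg fun c _ => μ.nonneg _)
    (Nat.cast_nonneg _)
  total := by
    have : ∀ c ∈ P, μ.m ((Quotient.out c)⁻¹ • (Set.univ : Set X)) = 1 := by
      intro c _
      rw [Set.smul_set_univ, μ.total]
    rw [Finset.sum_congr rfl this, Finset.sum_const, nsmul_eq_mul, mul_one, div_self]
    exact Nat.cast_ne_zero.mpr (Finset.card_ne_zero_of_mem hP.choose_spec)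
  fin_add := by
    intro A B hAB
    rw [← add_div]
    congr 1
    rw [← Finset.sum_add_distrib]
    apply Finset.sum_congr rfl
    intro c _
    rw [Set.smul_set_union]
    apply μ.fin_add
    rw [Set.disjoint_iff_inter_eq_empty, ← Set.smul_set_inter,
      Set.disjoint_iff_inter_eq_empty.mp hAB, Set.smul_set_empty]

lemma cosetMean_deficit [DecidableEq (G ⧸ H)] (μ : Mean X) (hinv : MeanInvariant ↥H μ)
    (P : Finset (G ⧸ H)) (hP : P.Nonempty) (s : G) (A : Set X) :
    (cosetMean μ P hP).m (s⁻¹ • A) - (cosetMean μ P hP).m A ≤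
      (((s • P) \ P).card : ℝ) / P.card := by
  have key : ∑ c ∈ P, μ.m ((Quotient.out c)⁻¹ • (s⁻¹ • A)) =
      ∑ c ∈ s • P, μ.m ((Quotient.out c)⁻¹ • A) := by
    rw [Finset.smul_finset_def, Finset.sum_image (fun x _ y _ h => MulAction.injective s h)]
    exact Finset.sum_congr rfl fun c _ => (mean_out_smul μ hinv s c A).symm
  show (∑ c ∈ P, μ.m ((Quotient.out c)⁻¹ • (s⁻¹ • A))) / P.card -
      (∑ c ∈ P, μ.m ((Quotient.out c)⁻¹ • A)) / P.card ≤ _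
  rw [key, div_sub_div_same, div_le_div_iff_of_pos_right (by exact_mod_cast hP.card_pos)]
  set f : G ⧸ H → ℝ := fun c => μ.m ((Quotient.out c)⁻¹ • A) with hf
  have h1 := Finset.sum_inter_add_sum_sdiff (s • P) P f
  have h2 : ∑ c ∈ P, f c ≥ ∑ c ∈ (s • P) ∩ P, f c := by
    rw [Finset.inter_comm]
    exact Finset.sum_le_sum_of_subset_of_nonneg (Finset.inter_subset_left)
      (fun c _ _ => μ.nonneg _)
  have h3 : ∑ c ∈ (s • P) \ P, f c ≤ ((s • P) \ P).card := by
    calc ∑ c ∈ (s • P) \ P, f c ≤ ∑ _c ∈ (s • P) \ P, (1 : ℝ) :=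
          Finset.sum_le_sum fun c _ => μ.le_one _
      _ = _ := by rw [Finset.sum_const, nsmul_eq_mul, mul_one]
  linarith

end CosetMean

section Peel

variable {G : Type*} [Group G] {X : Type*} [MulAction G X] [DecidableEq X]

/-- Co-area/peeling lemma: if every positive level set of `F` is `ρ`-bad, then the total
`ℓ¹`-gradient of `F` is at least `ρ` times its total mass. -/
lemma peel (S : Finset G) (W : Finset X) (ρ : ℝ) :
    ∀ (n : ℕ) (F : X → ℝ), ((W.filter (fun y => 0 < F y)).image F).card ≤ n →
    (∀ z, F z ≠ 0 → z ∈ W) → (∀ s ∈ S, ∀ z : X, F z ≠ 0 → s • z ∈ W) →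
    (∀ z, 0 ≤ F z) →
    (∀ t : ℝ, 0 < t → (W.filter (fun y => t ≤ F y)).Nonempty →
      ρ * (W.filter (fun y => t ≤ F y)).card ≤
        ∑ s ∈ S, ((((s • (W.filter (fun y => t ≤ F y))) \ (W.filter (fun y => t ≤ F y))).card : ℝ)
          + (((W.filter (fun y => t ≤ F y)) \ (s • (W.filter (fun y => t ≤ F y)))).card : ℝ))) →
    ρ * ∑ y ∈ W, F y ≤ ∑ s ∈ S, ∑ y ∈ W, |F (s⁻¹ • y) - F y| := by
  intro n
  induction n with
  | zero =>
    intro F hcard hW hsW hnn _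
    have hV : (W.filter (fun y => 0 < F y)).image F = ∅ := by
      simpa using Finset.card_eq_zero.mp (Nat.le_zero.mp hcard)
    have hF0 : ∀ z, F z = 0 := by
      intro z
      by_contra hz
      have hzW := hW z hz
      have hzpos : 0 < F z := lt_of_le_of_ne (hnn z) (Ne.symm hz)
      have : F z ∈ (W.filter (fun y => 0 < F y)).image F :=
        Finset.mem_image_of_mem F (Finset.mem_filter.mpr ⟨hzW, hzpos⟩)
      simp [hV] at this
    simp [hF0]
  | succ n ih =>
    intro F hcard hW hsW hnn hbad
    set V := (W.filter (fun y => 0 < F y)).image F with hVdef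
    rcases Finset.eq_empty_or_nonempty V with hV | hVne
    · have hF0 : ∀ z, F z = 0 := by
        intro z
        by_contra hz
        have hzpos : 0 < F z := lt_of_le_of_ne (hnn z) (Ne.symm hz)
        have : F z ∈ V :=
          Finset.mem_image_of_mem F (Finset.mem_filter.mpr ⟨hW z hz, hzpos⟩)
        simp [hV] at this
      simp [hF0]
    · set M := V.max' hVne with hMdef
      obtain ⟨y₀, hy₀, hFy₀⟩ := Finset.mem_image.mp (V.max'_mem hVne)
      have hy₀W : y₀ ∈ W := (Finset.mem_filter.mp hy₀).1
      have hy₀pos : 0 < F y₀ := (Finset.mem_filter.mp hy₀).2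
      have hMpos : 0 < M := by rw [hMdef, ← hFy₀]; exact hy₀pos
      have hvalle : ∀ z, F z ≤ M := by
        intro z
        by_cases hz : F z = 0
        · rw [hz]; exact le_of_lt hMpos
        · exact V.le_max' _ (Finset.mem_image_of_mem F (Finset.mem_filter.mpr
            ⟨hW z hz, lt_of_le_of_ne (hnn z) (Ne.symm hz)⟩))
      set M₂ := (insert (0:ℝ) (V.erase M)).max' (Finset.insert_nonempty _ _) with hM₂def
      have hM₂mem : M₂ ∈ insert (0:ℝ) (V.erase M) := Finset.max'_mem _ _
      have hM₂nn : 0 ≤ M₂ := Finset.le_max' _ 0 (Finset.mem_insert_self _ _)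
      have hM₂lt : M₂ < M := by
        apply Finset.max'_lt_iff _ _ |>.mpr
        intro v hv
        rcases Finset.mem_insert.mp hv with h0 | hvV
        · rw [h0]; exact hMpos
        · exact lt_of_le_of_ne (V.le_max' _ (Finset.mem_of_mem_erase hvV))
            (Finset.ne_of_mem_erase hvV)
      set gap := M - M₂ with hgapdef
      have hgap : 0 < gap := by simp [hgapdef, hM₂lt]
      set Q := W.filter (fun y => M ≤ F y) with hQdef
      have hQne : Q.Nonempty := ⟨y₀, Finset.mem_filter.mpr ⟨hy₀W, le_of_eq hFy₀.symm⟩⟩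
      set F' : X → ℝ := fun z => F z - (if M ≤ F z then gap else 0) with hF'def
      have hFM : ∀ z, M ≤ F z → F z = M := fun z hz => le_antisymm (hvalle z) hz
      have hle₂ : ∀ z, ¬ (M ≤ F z) → F z ≤ M₂ := by
        intro z hz
        by_cases h0 : F z = 0
        · rw [h0]; exact hM₂nn
        · apply Finset.le_max'
          apply Finset.mem_insert_of_mem
          apply Finset.mem_erase.mpr
          refine ⟨fun hEq => hz (le_of_eq hEq.symm), ?_⟩
          exact Finset.mem_image_of_mem F (Finset.mem_filter.mpr
            ⟨hW z h0, lt_of_le_of_ne (hnn z) (Ne.symm h0)⟩)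
      have hF'nn : ∀ z, 0 ≤ F' z := by
        intro z
        simp only [hF'def]
        by_cases hz : M ≤ F z
        · rw [if_pos hz]; rw [hFM z hz]; simp [hgapdef]; linarith
        · rw [if_neg hz]; simpa using hnn z
      have hF'supp : ∀ z, F' z ≠ 0 → F z ≠ 0 := by
        intro z hz h0
        apply hz
        simp only [hF'def]
        simp only [h0]
        rw [if_neg (by linarith)]
        ring
      -- values of F'
      have hF'val : ∀ z, F' z = (if M ≤ F z then M₂ else F z) := by
        intro z
        simp only [hF'def]
        by_cases hz : M ≤ F z
        · rw [if_pos hz, if_pos hz, hFM z hz, hgapdef]; ring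
        · rw [if_neg hz, if_neg hz]; ring
      -- pointwise decomposition of differences
      have habs : ∀ z w : X, |F z - F w| = |F' z - F' w| +
          gap * |(if M ≤ F z then (1:ℝ) else 0) - (if M ≤ F w then (1:ℝ) else 0)| := by
        intro z w
        rw [hF'val z, hF'val w]
        by_cases hz : M ≤ F z <;> by_cases hw : M ≤ F w
        · rw [if_pos hz, if_pos hw, if_pos hz, if_pos hw, hFM z hz, hFM w hw]; simp
        · rw [if_pos hz, if_neg hw, if_pos hz, if_neg hw, hFM z hz]
          have h2 : F w ≤ M₂ := hle₂ w hw
          rw [abs_of_nonneg (by linarith), abs_of_nonneg (by linarith),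
            abs_of_nonneg (by norm_num)]
          rw [hgapdef]; ring
        · rw [if_neg hz, if_pos hw, if_neg hz, if_pos hw, hFM w hw]
          have h2 : F z ≤ M₂ := hle₂ z hz
          rw [abs_of_nonpos (by linarith), abs_of_nonpos (by linarith),
            abs_of_nonpos (by norm_num)]
          rw [hgapdef]; ring
        · rw [if_neg hz, if_neg hw, if_neg hz, if_neg hw]; simp
      -- mass identity
      have hmass : ∑ y ∈ W, F y = (∑ y ∈ W, F' y) + gap * Q.card := by
        have : ∀ y ∈ W, F y = F' y + (if M ≤ F y then gap else 0) := by
          intro y _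
          simp only [hF'def]; ring
        rw [Finset.sum_congr rfl this, Finset.sum_add_distrib]
        congr 1
        rw [← Finset.sum_filter, ← hQdef, Finset.sum_const, nsmul_eq_mul, mul_comm]
      -- membership translations
      have hmemQ : ∀ y, y ∈ Q ↔ M ≤ F y := by
        intro y
        rw [hQdef, Finset.mem_filter]
        constructor
        · exact fun h => h.2
        · intro h
          exact ⟨hW y (by intro h0; rw [h0] at h; linarith), h⟩
      have hmemsQ : ∀ (s : G) (y : X), y ∈ s • Q ↔ M ≤ F (s⁻¹ • y) := by
        intro s y
        rw [Finset.mem_smul_finset]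
        constructor
        · rintro ⟨b, hb, rfl⟩
          rw [inv_smul_smul]
          exact (hmemQ b).mp hb
        · intro h
          exact ⟨s⁻¹ • y, (hmemQ _).mpr h, smul_inv_smul s y⟩
      -- counting
      have hcount : ∀ s ∈ S, ∑ y ∈ W,
          |(if M ≤ F (s⁻¹ • y) then (1:ℝ) else 0) - (if M ≤ F y then (1:ℝ) else 0)| =
          ((((s • Q) \ Q).card : ℝ) + ((Q \ (s • Q)).card : ℝ)) := by
        intro s hs
        have hQW : Q ⊆ W := Finset.filter_subset _ _
        have hsQW : s • Q ⊆ W := by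
          intro y hy
          rw [Finset.mem_smul_finset] at hy
          obtain ⟨b, hb, rfl⟩ := hy
          apply hsW s hs
          intro h0
          have := (hmemQ b).mp hb
          rw [h0] at this; linarith
        have hpt : ∀ y ∈ W, |(if M ≤ F (s⁻¹ • y) then (1:ℝ) else 0) -
            (if M ≤ F y then (1:ℝ) else 0)| =
            (if y ∈ (s • Q) \ Q then (1:ℝ) else 0) + (if y ∈ Q \ (s • Q) then (1:ℝ) else 0) := by
          intro y _
          rw [if_congr (hmemsQ s y).symm rfl rfl, if_congr (hmemQ y).symm rfl rfl]
          by_cases h1 : y ∈ s • Q <;> by_cases h2 : y ∈ Q <;>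
            simp [Finset.mem_sdiff, h1, h2]
        rw [Finset.sum_congr rfl hpt, Finset.sum_add_distrib, Finset.sum_boole,
          Finset.sum_boole, Finset.filter_mem_eq_inter, Finset.filter_mem_eq_inter,
          Finset.inter_eq_right.mpr (Finset.sdiff_subset.trans hsQW),
          Finset.inter_eq_right.mpr (Finset.sdiff_subset.trans hQW)]
      -- gradient identity
      have hsplit : ∀ s ∈ S, ∑ y ∈ W, |F (s⁻¹ • y) - F y| =
          (∑ y ∈ W, |F' (s⁻¹ • y) - F' y|) +
            gap * ((((s • Q) \ Q).card : ℝ) + ((Q \ (s • Q)).card : ℝ)) := by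
        intro s hs
        rw [← hcount s hs, Finset.mul_sum, ← Finset.sum_add_distrib]
        exact Finset.sum_congr rfl fun y _ => habs (s⁻¹ • y) y
      -- induction hypothesis applied to F'
      have hcard' : ((W.filter (fun y => 0 < F' y)).image F').card ≤ n := by
        have hsub : (W.filter (fun y => 0 < F' y)).image F' ⊆ V.erase M := by
          intro v hv
          obtain ⟨y, hy, rfl⟩ := Finset.mem_image.mp hv
          obtain ⟨hyW, hypos⟩ := Finset.mem_filter.mp hy
          rw [Finset.mem_erase]
          rw [hF'val y] at hypos ⊢
          by_cases hyM : M ≤ F y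
          · rw [if_pos hyM] at hypos ⊢
            constructor
            · exact ne_of_lt hM₂lt
            · rcases Finset.mem_insert.mp hM₂mem with h0 | hV'
              · rw [← h0] at hypos; exact absurd hypos (lt_irrefl _)
              · exact Finset.mem_of_mem_erase hV'
          · rw [if_neg hyM] at hypos ⊢
            refine ⟨fun hEq => hyM (le_of_eq hEq.symm), ?_⟩
            exact Finset.mem_image_of_mem F (Finset.mem_filter.mpr ⟨hyW, hypos⟩)
        calc ((W.filter (fun y => 0 < F' y)).image F').card ≤ (V.erase M).card :=
              Finset.card_le_card hsub
          _ ≤ n := by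
              rw [Finset.card_erase_of_mem (V.max'_mem hVne)]
              omega
      have hW' : ∀ z, F' z ≠ 0 → z ∈ W := fun z hz => hW z (hF'supp z hz)
      have hsW' : ∀ s ∈ S, ∀ z : X, F' z ≠ 0 → s • z ∈ W :=
        fun s hs z hz => hsW s hs z (hF'supp z hz)
      have hbad' : ∀ t : ℝ, 0 < t → (W.filter (fun y => t ≤ F' y)).Nonempty →
          ρ * (W.filter (fun y => t ≤ F' y)).card ≤
            ∑ s ∈ S, ((((s • (W.filter (fun y => t ≤ F' y))) \ (W.filter (fun y => t ≤ F' y))).card : ℝ)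
              + (((W.filter (fun y => t ≤ F' y)) \ (s • (W.filter (fun y => t ≤ F' y)))).card : ℝ)) := by
        intro t ht htne
        have hlev : W.filter (fun y => t ≤ F' y) = W.filter (fun y => t ≤ F y) := by
          by_cases htM₂ : t ≤ M₂
          · apply Finset.filter_congr
            intro y _
            rw [hF'val y]
            by_cases hyM : M ≤ F y
            · rw [if_pos hyM]
              have hyM' := hFM y hyM
              exact ⟨fun _ => by linarith, fun _ => htM₂⟩
            · rw [if_neg hyM]
          · exfalso
            obtain ⟨y, hy⟩ := htne
            obtain ⟨hyW, hyt⟩ := Finset.mem_filter.mp hy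
            have : F' y ≤ M₂ := by
              rw [hF'val y]
              by_cases hyM : M ≤ F y
              · rw [if_pos hyM]
              · rw [if_neg hyM]
                by_cases h0 : F y = 0
                · rw [h0]; exact hM₂nn
                · exact hle₂ y hyM
            linarith
        rw [hlev]
        exact hbad t ht (hlev ▸ htne)
      have hIH := ih F' hcard' hW' hsW' hF'nn hbad'
      -- badness at the top level
      have htop := hbad M hMpos (by rw [← hQdef]; exact hQne)
      rw [← hQdef] at htop
      -- combine
      have hsum : ∑ s ∈ S, ∑ y ∈ W, |F (s⁻¹ • y) - F y| =
          (∑ s ∈ S, ∑ y ∈ W, |F' (s⁻¹ • y) - F' y|) +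
            gap * ∑ s ∈ S, ((((s • Q) \ Q).card : ℝ) + ((Q \ (s • Q)).card : ℝ)) := by
        rw [Finset.mul_sum, ← Finset.sum_add_distrib]
        exact Finset.sum_congr rfl hsplit
      rw [hmass, hsum]
      have h1 : ρ * (gap * Q.card) ≤ gap *
          ∑ s ∈ S, ((((s • Q) \ Q).card : ℝ) + ((Q \ (s • Q)).card : ℝ)) := by
        calc ρ * (gap * Q.card) = gap * (ρ * Q.card) := by ring
          _ ≤ _ := mul_le_mul_of_nonneg_left htop (le_of_lt hgap)
      nlinarith [hIH]

end Peel

lemma exists_good_level {G : Type*} [Group G] {X : Type*} [MulAction G X] [DecidableEq X]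
    (S : Finset G) (W : Finset X) (F : X → ℝ) (ρ : ℝ)
    (hW : ∀ z, F z ≠ 0 → z ∈ W) (hsW : ∀ s ∈ S, ∀ z : X, F z ≠ 0 → s • z ∈ W)
    (hnn : ∀ z, 0 ≤ F z)
    (hgrad : ∑ s ∈ S, ∑ y ∈ W, |F (s⁻¹ • y) - F y| < ρ * ∑ y ∈ W, F y) :
    ∃ Q : Finset X, Q.Nonempty ∧ ∑ s ∈ S, (((s • Q) \ Q).card : ℝ) ≤ (ρ / 2) * Q.card := by
  by_contra hcon
  push_neg at hcon
  have hbad : ∀ t : ℝ, 0 < t → (W.filter (fun y => t ≤ F y)).Nonempty →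
      ρ * (W.filter (fun y => t ≤ F y)).card ≤
        ∑ s ∈ S, ((((s • (W.filter (fun y => t ≤ F y))) \ (W.filter (fun y => t ≤ F y))).card : ℝ)
          + (((W.filter (fun y => t ≤ F y)) \ (s • (W.filter (fun y => t ≤ F y)))).card : ℝ)) := by
    intro t ht htne
    set Q := W.filter (fun y => t ≤ F y) with hQdef
    have heq : ∀ s : G, ((Q \ (s • Q)).card : ℝ) = (((s • Q) \ Q).card : ℝ) := by
      intro s
      norm_cast
      exact Finset.card_sdiff_comm (Finset.card_smul_finset s Q).symm
    have : ∑ s ∈ S, ((((s • Q) \ Q).card : ℝ) + ((Q \ (s • Q)).card : ℝ)) =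
        2 * ∑ s ∈ S, (((s • Q) \ Q).card : ℝ) := by
      rw [Finset.mul_sum]
      exact Finset.sum_congr rfl fun s _ => by rw [heq s]; ring
    rw [this]
    have := le_of_lt (hcon Q htne)
    linarith
  have := peel S W ρ ((W.filter (fun y => 0 < F y)).image F).card F le_rfl hW hsW hnn hbad
  linarith

lemma mean_no_almost_inv {G : Type*} [Group G] {X : Type*} [MulAction G X]
    (μ : Mean X) (S : Finset G) (D : G → ℝ)
    (hdef : ∀ s ∈ S, ∀ A : Set X, μ.m ((s⁻¹ : G) • A) - μ.m A ≤ D s)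
    (u : G → X → ℝ) (hu0 : ∀ s ∈ S, ∀ x, 0 ≤ u s x) (hu1 : ∀ s ∈ S, ∀ x, u s x ≤ 1)
    (c : ℝ) (hc : ∀ x : X, c ≤ ∑ s ∈ S, (u s (s • x) - u s x)) :
    c ≤ ∑ s ∈ S, D s := by
  classical
  apply le_of_forall_pos_le_add
  intro ε hε
  obtain ⟨k, hk⟩ := exists_nat_gt ((S.card : ℝ) / ε)
  have hk0 : 0 < k := by
    by_contra h
    push_neg at h
    interval_cases k
    simp at hk
    exact absurd hk (not_lt.mpr (div_nonneg (Nat.cast_nonneg _) (le_of_lt hε)))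
  have hkR : (0:ℝ) < k := Nat.cast_pos.mpr hk0
  have hSk : (S.card : ℝ) / k < ε := by
    rw [div_lt_iff₀ hkR]
    rw [div_lt_iff₀ hε] at hk
    linarith [hk]
  -- the level sets
  set A : ↥S → Fin k → Set X := fun s j => {y | (j : ℕ) < Nat.floor ((k:ℝ) * u s y)} with hA
  set ι := ↥S × Fin k × Bool
  set a : ι → ℝ := fun i => if i.2.2 then 1/k else -(1/k) with ha
  set B : ι → Set X := fun i => if i.2.2 then ((i.1 : G))⁻¹ • A i.1 i.2.1 else A i.1 i.2.1
    with hB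
  -- counting lemma
  have hcount : ∀ (s : ↥S) (y : X), ∑ j : Fin k,
      (if y ∈ A s j then (1:ℝ) else 0) = Nat.floor ((k:ℝ) * u s y) := by
    intro s y
    have hfl : Nat.floor ((k:ℝ) * u s y) ≤ k := by
      apply Nat.floor_le_of_le
      calc (k:ℝ) * u s y ≤ k * 1 := by
            apply mul_le_mul_of_nonneg_left (hu1 s s.2 y) (le_of_lt hkR)
        _ = k := mul_one _
    have : ∀ j : Fin k, (y ∈ A s j) = ((j:ℕ) < Nat.floor ((k:ℝ) * u s y)) := by
      intro j; rfl
    simp only [this]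
    rw [Fin.sum_univ_eq_sum_range (fun j => if j < Nat.floor ((k:ℝ) * u s y) then (1:ℝ) else 0)]
    rw [Finset.sum_boole]
    congr 1
    have : (Finset.range k).filter (fun j => j < Nat.floor ((k:ℝ) * u s y)) =
        Finset.range (Nat.floor ((k:ℝ) * u s y)) := by
      ext j
      simp only [Finset.mem_filter, Finset.mem_range]
      omega
    rw [this, Finset.card_range]
  -- floor bounds
  have hfloor1 : ∀ (s : ↥S) (y : X), (k:ℝ) * u s y - 1 ≤ (Nat.floor ((k:ℝ) * u s y) : ℝ) := by
    intro s y
    have := Nat.lt_floor_add_one ((k:ℝ) * u s y)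
    linarith
  have hfloor2 : ∀ (s : ↥S) (y : X), (Nat.floor ((k:ℝ) * u s y) : ℝ) ≤ (k:ℝ) * u s y := by
    intro s y
    exact Nat.floor_le (mul_nonneg (le_of_lt hkR) (hu0 s s.2 y))
  -- pointwise bound
  have hpt : ∀ x : X, c - (S.card : ℝ)/k ≤ ∑ i : ι, (B i).indicator (fun _ => a i) x := by
    intro x
    have hexp : ∑ i : ι, (B i).indicator (fun _ => a i) x =
        ∑ s : ↥S, ((1/(k:ℝ)) * (Nat.floor ((k:ℝ) * u s ((s:G) • x)) : ℝ) -
          (1/(k:ℝ)) * (Nat.floor ((k:ℝ) * u s x) : ℝ)) := by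
      rw [Fintype.sum_prod_type]
      apply Finset.sum_congr rfl
      intro s _
      rw [Fintype.sum_prod_type]
      have hj : ∀ j : Fin k, ∑ b : Bool, (B (s, j, b)).indicator (fun _ => a (s, j, b)) x =
          (if (s:G) • x ∈ A s j then (1:ℝ) else 0) * (1/(k:ℝ)) -
            (if x ∈ A s j then (1:ℝ) else 0) * (1/(k:ℝ)) := by
        intro j
        rw [Fintype.sum_bool]
        have hmem : x ∈ ((s:G))⁻¹ • A s j ↔ (s:G) • x ∈ A s j := by
          rw [Set.mem_smul_set_iff_inv_smul_mem, inv_inv]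
        simp only [hB, ha, Set.indicator_apply, if_true, if_false, Bool.false_eq_true]
        by_cases h1 : x ∈ ((s:G))⁻¹ • A s j <;> by_cases h2 : x ∈ A s j <;>
          simp [h1, h2, hmem.symm.mpr, ← hmem] <;> ring_nf <;>
          first
            | rfl
            | (rw [if_pos (hmem.mp h1)]; ring)
            | (rw [if_neg (fun hh => h1 (hmem.mpr hh))]; ring)
      rw [Finset.sum_congr rfl (fun j _ => hj j), Finset.sum_sub_distrib,
        ← Finset.sum_mul, ← Finset.sum_mul, hcount, hcount]
      ring
    rw [hexp]
    have hterm : ∀ s : ↥S, u (s:G) ((s:G) • x) - u (s:G) x - 1/(k:ℝ) ≤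
        (1/(k:ℝ)) * (Nat.floor ((k:ℝ) * u s ((s:G) • x)) : ℝ) -
          (1/(k:ℝ)) * (Nat.floor ((k:ℝ) * u s x) : ℝ) := by
      intro s
      have h1 := hfloor1 s ((s:G) • x)
      have h2 := hfloor2 s x
      have e1 : (1/(k:ℝ)) * ((k:ℝ) * u s ((s:G) • x) - 1) =
          u (s:G) ((s:G) • x) - 1/(k:ℝ) := by field_simp
      have e2 : (1/(k:ℝ)) * ((k:ℝ) * u s x) = u (s:G) x := by field_simp
      have hki : 0 < 1/(k:ℝ) := by positivity
      nlinarith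
    calc c - (S.card : ℝ)/k
        ≤ (∑ s ∈ S, (u s (s • x) - u s x)) - (S.card : ℝ)/k := by linarith [hc x]
      _ = ∑ s : ↥S, (u (s:G) ((s:G) • x) - u (s:G) x - 1/(k:ℝ)) := by
          have heq : ∑ s : ↥S, (u (s:G) ((s:G) • x) - u (s:G) x - 1/(k:ℝ)) =
              (∑ s ∈ S, (u s (s • x) - u s x)) - (S.card : ℝ)/k := by
            rw [Finset.sum_sub_distrib, Finset.sum_const, Finset.sum_coe_sort S
              (fun s => u s (s • x) - u s x), nsmul_eq_mul, Finset.card_univ, Fintype.card_coe]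
            ring
          rw [heq]
      _ ≤ _ := Finset.sum_le_sum fun s _ => hterm s
  -- apply the atom lemma
  have hmain := μ.sum_indicator_ge B a (c - (S.card : ℝ)/k) hpt
  -- bound the mean side
  have hbound : ∑ i : ι, a i * μ.m (B i) ≤ ∑ s ∈ S, D s := by
    rw [Fintype.sum_prod_type]
    rw [← Finset.sum_coe_sort S D]
    apply Finset.sum_le_sum
    intro s _
    rw [Fintype.sum_prod_type]
    have hj : ∀ j : Fin k, ∑ b : Bool, a (s, j, b) * μ.m (B (s, j, b)) ≤ (1/(k:ℝ)) * D s := by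
      intro j
      rw [Fintype.sum_bool]
      simp only [hB, ha, if_true, if_false, Bool.false_eq_true]
      have := hdef (s:G) s.2 (A s j)
      have hk1 : (0:ℝ) ≤ 1/(k:ℝ) := by positivity
      calc 1/(k:ℝ) * μ.m (((s:G))⁻¹ • A s j) + -(1/(k:ℝ)) * μ.m (A s j)
          = (1/(k:ℝ)) * (μ.m (((s:G))⁻¹ • A s j) - μ.m (A s j)) := by ring
        _ ≤ (1/(k:ℝ)) * D s := mul_le_mul_of_nonneg_left this hk1
    calc ∑ j : Fin k, ∑ b : Bool, a (s, j, b) * μ.m (B (s, j, b))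
        ≤ ∑ _j : Fin k, (1/(k:ℝ)) * D s := Finset.sum_le_sum fun j _ => hj j
      _ = D s := by
          rw [Finset.sum_const, Finset.card_univ, Fintype.card_fin, nsmul_eq_mul]
          field_simp
  have := le_trans hmain hbound
  linarith

section Day

lemma lp_coe_sum' {α : Type*} {ι : Type*} (f : Finset ι) (v : ι → lp (fun _ : α => ℝ) 1)
    (j : α) : (↑(∑ i ∈ f, v i) : α → ℝ) j = ∑ i ∈ f, (↑(v i) : α → ℝ) j := by
  classical
  induction f using Finset.induction with
  | empty => simp
  | @insert a s h ih => rw [Finset.sum_insert h, lp.coeFn_add, Pi.add_apply, ih,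
      Finset.sum_insert h]

variable {G : Type*} [Group G] {X : Type*} [MulAction G X]

lemma day_dichotomy [DecidableEq X] (S : Finset G) (ρ : ℝ) (hρ : 0 < ρ) :
    (∃ Q : Finset X, Q.Nonempty ∧ ∑ s ∈ S, (((s • Q) \ Q).card : ℝ) ≤ (ρ / 2) * Q.card) ∨
    (∃ u : G → X → ℝ, (∀ s ∈ S, ∀ x, 0 ≤ u s x) ∧ (∀ s ∈ S, ∀ x, u s x ≤ 1) ∧
      ∀ x : X, ρ / 2 ≤ ∑ s ∈ S, (u s (s • x) - u s x)) := by
  classical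
  set E := lp (fun _ : G × X => ℝ) 1 with hE
  set δ : G × X → E := fun p => lp.single 1 p (1:ℝ) with hδ
  set τ : X → E := fun x => ∑ s ∈ S, (δ (s, s • x) - δ (s, x)) with hτ
  set C : Set E := convexHull ℝ (Set.range τ) with hC
  have hδ_apply : ∀ (p q : G × X), (↑(δ p) : G × X → ℝ) q = if q = p then 1 else 0 := by
    intro p q
    by_cases h : q = p <;> simp [hδ, lp.single_apply, h]
  by_cases hdisj : Disjoint (Metric.ball (0:E) ρ) C
  · -- separation: almost invariant functions exist
    right
    obtain ⟨f, u₀, hfB, hfC⟩ := geometric_hahn_banach_open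
      (convex_ball (0:E) ρ) Metric.isOpen_ball (convex_convexHull ℝ _) hdisj
    have hu₀ : 0 < u₀ := by
      have := hfB 0 (Metric.mem_ball_self hρ)
      simpa using this
    have hbound : ∀ p : G × X, |f (δ p)| * ρ ≤ u₀ := by
      intro p
      rcases eq_or_ne (f (δ p)) 0 with h0 | h0
      · rw [h0]; simpa using le_of_lt hu₀
      · by_contra hcon
        push_neg at hcon
        have habs : 0 < |f (δ p)| := abs_pos.mpr h0
        obtain ⟨t, ht1, ht2⟩ := exists_between (div_lt_iff₀ habs |>.mpr
          (by rw [mul_comm]; exact hcon) : u₀ / |f (δ p)| < ρ)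
        have ht0 : 0 < t := lt_of_le_of_lt (div_nonneg (le_of_lt hu₀) (le_of_lt habs)) ht1
        have hnorm : ‖(if 0 ≤ f (δ p) then t else -t) • δ p‖ < ρ := by
          rw [norm_smul, hδ]
          beta_reduce
          erw [lp.norm_single (E := fun _ : G × X => ℝ) (p := 1) (by norm_num) p (1:ℝ)]
          simp only [norm_one, mul_one]
          rw [Real.norm_eq_abs]
          split <;> simp [abs_of_pos ht0, ht2]
        have := hfB _ (mem_ball_zero_iff.mpr hnorm)
        rw [map_smul] at this
        have ht3 : t * |f (δ p)| < u₀ := by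
          split at this
          · rename_i hsgn
            rw [abs_of_nonneg hsgn]
            simpa using this
          · rename_i hsgn
            rw [abs_of_neg (lt_of_not_ge hsgn)]
            simpa using this
        rw [div_lt_iff₀ habs] at ht1
        linarith
    set h : G × X → ℝ := fun p => (ρ / u₀) * f (δ p) with hh
    have hh1 : ∀ p, |h p| ≤ 1 := by
      intro p
      rw [hh]
      rw [abs_mul, abs_of_pos (div_pos hρ hu₀)]
      rw [div_mul_eq_mul_div, div_le_one hu₀, mul_comm]
      exact hbound p
    refine ⟨fun s x => if s ∈ S then (h (s, x) + 1)/2 else 0, ?_, ?_, ?_⟩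
    · intro s hs x
      dsimp only
      rw [if_pos hs]
      have := abs_le.mp (hh1 (s, x))
      linarith [this.1]
    · intro s hs x
      dsimp only
      rw [if_pos hs]
      have := abs_le.mp (hh1 (s, x))
      linarith [this.2]
    · intro x
      have hτC : τ x ∈ C := subset_convexHull ℝ _ (Set.mem_range_self x)
      have hfτ := hfC _ hτC
      have hlin : f (τ x) = ∑ s ∈ S, (f (δ (s, s • x)) - f (δ (s, x))) := by
        rw [hτ, map_sum]
        exact Finset.sum_congr rfl fun s _ => map_sub f _ _
      have : ∑ s ∈ S, ((if s ∈ S then (h (s, s • x) + 1)/2 else 0) -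
          (if s ∈ S then (h (s, x) + 1)/2 else 0)) =
          (ρ / (2 * u₀)) * f (τ x) := by
        rw [hlin, Finset.mul_sum]
        apply Finset.sum_congr rfl
        intro s hs
        rw [if_pos hs, if_pos hs, hh]
        field_simp
        ring
      rw [this]
      calc ρ / 2 = (ρ / (2 * u₀)) * u₀ := by field_simp
        _ ≤ (ρ / (2 * u₀)) * f (τ x) := by
            apply mul_le_mul_of_nonneg_left hfτ
            positivity
  · -- no separation: a Følner set exists
    left
    rw [Set.not_disjoint_iff] at hdisj
    obtain ⟨v, hvB, hvC⟩ := hdisj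
    rw [hC, convexHull_eq] at hvC
    obtain ⟨ι', t, w, z, hw0, hw1, hz, hcm⟩ := hvC
    have htne : t.Nonempty := by
      rcases Finset.eq_empty_or_nonempty t with h | h
      · rw [h] at hw1; simp at hw1
      · exact h
    obtain ⟨i₀, hi₀⟩ := htne
    have : ∃ xx : X, τ xx = z i₀ := hz i₀ hi₀
    haveI : Nonempty X := ⟨this.choose⟩
    set x : ι' → X := fun i => if hxi : ∃ xx : X, τ xx = z i then hxi.choose
      else Classical.arbitrary X with hx
    have hxz : ∀ i ∈ t, τ (x i) = z i := by
      intro i hi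
      simp only [hx]
      split
      · next hex => exact hex.choose_spec
      · next hnex => exact absurd (hz i hi) hnex
    have hv : v = ∑ i ∈ t, w i • τ (x i) := by
      rw [← hcm, Finset.centerMass_eq_of_sum_1 _ _ hw1]
      exact (Finset.sum_congr rfl fun i hi => by rw [hxz i hi]).symm
    set F : X → ℝ := fun y => ∑ i ∈ t, w i * (if x i = y then 1 else 0) with hF
    set D : Finset X := t.image x with hD
    set W : Finset X := D ∪ S.biUnion (fun s => D.image (s • ·)) with hW
    have hDW : D ⊆ W := Finset.subset_union_left
    have hsupp : ∀ zz : X, F zz ≠ 0 → zz ∈ D := by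
      intro zz hzz
      by_contra hznD
      apply hzz
      rw [hF]
      apply Finset.sum_eq_zero
      intro i hi
      rw [if_neg, mul_zero]
      intro hEq
      exact hznD (hEq ▸ Finset.mem_image_of_mem x hi)
    have hWsupp : ∀ zz : X, F zz ≠ 0 → zz ∈ W := fun zz hzz => hDW (hsupp zz hzz)
    have hsWsupp : ∀ s ∈ S, ∀ zz : X, F zz ≠ 0 → s • zz ∈ W := by
      intro s hs zz hzz
      rw [hW]
      apply Finset.mem_union_right
      exact Finset.mem_biUnion.mpr ⟨s, hs, Finset.mem_image_of_mem _ (hsupp zz hzz)⟩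
    have hFnn : ∀ zz, 0 ≤ F zz := by
      intro zz
      apply Finset.sum_nonneg
      intro i hi
      apply mul_nonneg (hw0 i hi)
      split <;> norm_num
    have hFtot : ∑ y ∈ W, F y = 1 := by
      simp only [hF]
      rw [Finset.sum_comm]
      have hrow : ∀ i ∈ t, ∑ y ∈ W, w i * (if x i = y then (1:ℝ) else 0) = w i := by
        intro i hi
        rw [← Finset.mul_sum, Finset.sum_ite_eq (W) (x i) (fun _ => (1:ℝ)),
          if_pos (hDW (Finset.mem_image_of_mem x hi)), mul_one]
      rw [Finset.sum_congr rfl hrow, hw1]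
    -- coordinates of v
    have hcoord : ∀ s ∈ S, ∀ y : X, (↑v : G × X → ℝ) (s, y) = F (s⁻¹ • y) - F y := by
      intro s hs y
      rw [hv, lp_coe_sum']
      have hterm : ∀ i ∈ t, (↑(w i • τ (x i)) : G × X → ℝ) (s, y) =
          w i * ((if x i = s⁻¹ • y then 1 else 0) - (if x i = y then 1 else 0)) := by
        intro i hi
        rw [lp.coeFn_smul, Pi.smul_apply, smul_eq_mul]
        congr 1
        simp only [hτ]
        rw [lp_coe_sum']
        have hper : ∀ s' ∈ S, (↑(δ (s', s' • x i) - δ (s', x i)) : G × X → ℝ) (s, y) =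
            if s' = s then ((if x i = s⁻¹ • y then 1 else 0) - (if x i = y then 1 else 0))
              else 0 := by
          intro s' _
          rw [lp.coeFn_sub, Pi.sub_apply, hδ_apply, hδ_apply]
          by_cases hss : s' = s
          · subst hss
            rw [if_pos rfl]
            congr 1
            · by_cases h1 : x i = s'⁻¹ • y
              · rw [if_pos h1, if_pos (by rw [Prod.mk.injEq]; exact ⟨rfl, by
                  rw [h1, smul_inv_smul]⟩)]
              · rw [if_neg h1, if_neg (by
                  rw [Prod.mk.injEq]
                  rintro ⟨-, h2⟩
                  exact h1 (by rw [h2, inv_smul_smul]))]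
            · by_cases h1 : x i = y
              · rw [if_pos h1, if_pos (by rw [Prod.mk.injEq]; exact ⟨rfl, h1.symm⟩)]
              · rw [if_neg h1, if_neg (by
                  rw [Prod.mk.injEq]
                  rintro ⟨-, h2⟩
                  exact h1 h2.symm)]
          · rw [if_neg hss, if_neg (by rw [Prod.mk.injEq]; rintro ⟨h2, -⟩; exact hss h2.symm),
              if_neg (by rw [Prod.mk.injEq]; rintro ⟨h2, -⟩; exact hss h2.symm)]
            ring
        rw [Finset.sum_congr rfl hper, Finset.sum_ite_eq' S s
          (fun _ => (if x i = s⁻¹ • y then (1:ℝ) else 0) - (if x i = y then 1 else 0))]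
        rw [if_pos hs]
      rw [Finset.sum_congr rfl hterm]
      simp only [hF]
      rw [← Finset.sum_sub_distrib]
      apply Finset.sum_congr rfl
      intro i _
      ring
    -- gradient bound from the norm
    have hgrad : ∑ s ∈ S, ∑ y ∈ W, |F (s⁻¹ • y) - F y| < ρ := by
      have hpart : ∑ p ∈ S ×ˢ W, |(↑v : G × X → ℝ) p| ≤ ‖v‖ := by
        have := lp.sum_rpow_le_norm_rpow (p := 1) (by norm_num) v (S ×ˢ W)
        simpa using this
      have : ∑ s ∈ S, ∑ y ∈ W, |F (s⁻¹ • y) - F y| = ∑ p ∈ S ×ˢ W, |(↑v : G × X → ℝ) p| := by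
        rw [Finset.sum_product]
        exact (Finset.sum_congr rfl fun s hs => Finset.sum_congr rfl fun y _ => by
          rw [hcoord s hs y]).symm
      rw [this]
      calc ∑ p ∈ S ×ˢ W, |(↑v : G × X → ℝ) p| ≤ ‖v‖ := hpart
        _ < ρ := mem_ball_zero_iff.mp hvB
    have := exists_good_level S W F ρ hWsupp hsWsupp hFnn (by rw [hFtot, mul_one]; exact hgrad)
    exact this

end Day

/-- Lemma: if `S` generates `G` and the restriction to `H ≤ G` of the action `G ↷ X` is
amenable, then `φ_S(G/H) ≥ φ_S(X)`. -/
theorem phi_coset_ge_phi {G : Type*} [Group G] [Countable G] (S : Finset G)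
    (hS : Subgroup.closure (S : Set G) = ⊤) {X : Type*} [MulAction G X]
    (H : Subgroup G) (hH : AmenableAction ↥H X) :
    phiConst S X ≤ phiConst S (G ⧸ H) := by
  classical
  obtain ⟨mm, hmm⟩ := hH
  rw [phiConst, phiConst]
  apply le_csInf
  · exact ⟨_, ⟨{((1 : G) : G ⧸ H)}, Finset.singleton_nonempty _, rfl⟩⟩
  · rintro b ⟨P, hPne, rfl⟩
    set r := (∑ s ∈ S, (((s • (P : Set (G ⧸ H))) \ (P : Set (G ⧸ H))).ncard : ℝ)) / (P.card : ℝ)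
      with hrdef
    have hbdd : BddBelow {r : ℝ | ∃ Q : Finset X, Q.Nonempty ∧
        r = (∑ s ∈ S, (((s • (Q : Set X)) \ (Q : Set X)).ncard : ℝ)) / (Q.card : ℝ)} := by
      refine ⟨0, ?_⟩
      rintro b ⟨Q, hQ, rfl⟩
      exact div_nonneg (Finset.sum_nonneg fun _ _ => Nat.cast_nonneg _) (Nat.cast_nonneg _)
    have hr0 : 0 ≤ r :=
      div_nonneg (Finset.sum_nonneg fun _ _ => Nat.cast_nonneg _) (Nat.cast_nonneg _)
    have hrsum : ∑ s ∈ S, (((s • P \ P).card : ℝ)) / (P.card : ℝ) = r := by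
      rw [hrdef, ← Finset.sum_div]
      congr 1
      apply Finset.sum_congr rfl
      intro s _
      rw [← Finset.coe_smul_finset, ← Finset.coe_sdiff, Set.ncard_coe_finset]
    have key : ∀ ε : ℝ, 0 < ε → sInf {r : ℝ | ∃ Q : Finset X, Q.Nonempty ∧
        r = (∑ s ∈ S, (((s • (Q : Set X)) \ (Q : Set X)).ncard : ℝ)) / (Q.card : ℝ)} ≤ r + ε := by
      intro ε hε
      have hρpos : (0:ℝ) < 2 * r + 2 * ε := by linarith
      rcases day_dichotomy (X := X) S (2 * r + 2 * ε) hρpos with ⟨Q, hQne, hQ⟩ |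
        ⟨u, hu0, hu1, huc⟩
      · have hmem : (∑ s ∈ S, (((s • (Q : Set X)) \ (Q : Set X)).ncard : ℝ)) / (Q.card : ℝ) ∈
            {r : ℝ | ∃ Q : Finset X, Q.Nonempty ∧
              r = (∑ s ∈ S, (((s • (Q : Set X)) \ (Q : Set X)).ncard : ℝ)) / (Q.card : ℝ)} :=
          ⟨Q, hQne, rfl⟩
        refine le_trans (csInf_le hbdd hmem) ?_
        have hconv : ∑ s ∈ S, (((s • (Q : Set X)) \ (Q : Set X)).ncard : ℝ) =
            ∑ s ∈ S, (((s • Q \ Q).card : ℝ)) := by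
          apply Finset.sum_congr rfl
          intro s _
          rw [← Finset.coe_smul_finset, ← Finset.coe_sdiff, Set.ncard_coe_finset]
        have hQpos : (0:ℝ) < Q.card := by exact_mod_cast hQne.card_pos
        rw [hconv, div_le_iff₀ hQpos]
        calc ∑ s ∈ S, (((s • Q \ Q).card : ℝ)) ≤ ((2 * r + 2 * ε) / 2) * Q.card := hQ
          _ = (r + ε) * Q.card := by ring
      · exfalso
        have hdef : ∀ s ∈ S, ∀ A : Set X,
            (cosetMean mm P hPne).m ((s⁻¹ : G) • A) - (cosetMean mm P hPne).m A ≤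
              (fun s => (((s • P \ P).card : ℝ)) / (P.card : ℝ)) s :=
          fun s _ A => cosetMean_deficit mm hmm P hPne s A
        have hmain := mean_no_almost_inv (cosetMean mm P hPne) S _ hdef u hu0 hu1
          ((2 * r + 2 * ε) / 2) huc
        rw [hrsum] at hmain
        linarith
    exact le_of_forall_pos_le_add key
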